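/- For integers n ≥ 3 and m ≥ 2, let C_n be the cycle with n vertices and P_m the path with m vertices. Then AT(C_n +_S P_m) = 3. -/

import Mathlib

open scoped Classical

/-- The outdegree of a vertex `v` in a finite set of arcs `A`. -/
noncomputable def arcOutDeg {V : Type*} (A : Finset (V × V)) (v : V) : ℕ :=
  (A.filter fun a => a.1 = v).card

/-- The indegree of a vertex `v` in a finite set of arcs `A`. -/
noncomputable def arcInDeg {V : Type*} (A : Finset (V × V)) (v : V) : ℕ :=
  (A.filter fun a => a.2 = v).card

/-- `A` is an orientation of the simple graph `G`: every arc of `A` joins adjacent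
vertices, and every edge of `G` receives exactly one of its two possible directions. -/
def IsOrientation {V : Type*} (G : SimpleGraph V) (A : Finset (V × V)) : Prop :=
  (∀ a ∈ A, G.Adj a.1 a.2) ∧ ∀ u v : V, G.Adj u v → ((u, v) ∈ A ↔ (v, u) ∉ A)

/-- A set of arcs is Eulerian if at every vertex the indegree equals the outdegree. -/
def IsEulerianSub {V : Type*} (B : Finset (V × V)) : Prop :=
  ∀ v : V, arcInDeg B v = arcOutDeg B v

/-- An orientation (given by its arc set `A`) is an Alon–Tarsi orientation if the number
of its even Eulerian sub-digraphs differs from the number of its odd Eulerian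
sub-digraphs. -/
def IsATOrientation {V : Type*} (A : Finset (V × V)) : Prop :=
  (A.powerset.filter fun B => IsEulerianSub B ∧ Even B.card).card ≠
    (A.powerset.filter fun B => IsEulerianSub B ∧ ¬ Even B.card).card

/-- The Alon–Tarsi number of `G`: the least `k` such that `G` has an Alon–Tarsi
orientation with maximum outdegree at most `k - 1` (i.e. `< k`). -/
noncomputable def alonTarsiNumber {V : Type*} (G : SimpleGraph V) : ℕ :=
  sInf {k : ℕ | ∃ A : Finset (V × V),
    IsOrientation G A ∧ IsATOrientation A ∧ ∀ v : V, arcOutDeg A v < k}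

/-- A graph is `k`-degenerate if every nonempty (induced) subgraph has a vertex of
degree at most `k`. -/
def Degenerate {V : Type*} (k : ℕ) (G : SimpleGraph V) : Prop :=
  ∀ s : Finset V, s.Nonempty → ∃ v ∈ s, (s.filter fun u => G.Adj v u).card ≤ k

/-- The subdivision graph `S(G)`: each edge `uv` of `G` is replaced by a path `u-e-v`
through the new vertex `e` corresponding to `uv`. -/
def subdivisionGraph {V : Type*} (G : SimpleGraph V) : SimpleGraph (V ⊕ ↥G.edgeSet) :=
  SimpleGraph.fromRel fun a b =>
    match a, b with
    | Sum.inl u, Sum.inr e => u ∈ (e : Sym2 V)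
    | _, _ => False

/-- The graph `R(G)`: `G` together with, for each edge `uv`, a new vertex joined to
`u` and `v`. -/
def rGraph {V : Type*} (G : SimpleGraph V) : SimpleGraph (V ⊕ ↥G.edgeSet) :=
  SimpleGraph.fromRel fun a b =>
    match a, b with
    | Sum.inl u, Sum.inl v => G.Adj u v
    | Sum.inl u, Sum.inr e => u ∈ (e : Sym2 V)
    | _, _ => False

/-- The graph `Q(G)`: new vertices joined to the endpoints of their edges, and two new
vertices joined iff the corresponding edges of `G` share an endpoint; original
vertices are pairwise nonadjacent. -/
def qGraph {V : Type*} (G : SimpleGraph V) : SimpleGraph (V ⊕ ↥G.edgeSet) :=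
  SimpleGraph.fromRel fun a b =>
    match a, b with
    | Sum.inl u, Sum.inr e => u ∈ (e : Sym2 V)
    | Sum.inr e, Sum.inr f => e ≠ f ∧ ∃ u : V, u ∈ (e : Sym2 V) ∧ u ∈ (f : Sym2 V)
    | _, _ => False

/-- The total graph `T(G)`. -/
def tGraph {V : Type*} (G : SimpleGraph V) : SimpleGraph (V ⊕ ↥G.edgeSet) :=
  SimpleGraph.fromRel fun a b =>
    match a, b with
    | Sum.inl u, Sum.inl v => G.Adj u v
    | Sum.inl u, Sum.inr e => u ∈ (e : Sym2 V)
    | Sum.inr e, Sum.inr f => e ≠ f ∧ ∃ u : V, u ∈ (e : Sym2 V) ∧ u ∈ (f : Sym2 V)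
    | _, _ => False

/-- The `F`-sum construction: given a graph `K` on `V ⊕ E` (playing the role of `F(G)`,
whose "original" vertices are those of the form `Sum.inl u`) and a graph `H` on `W`,
two vertices `(u₁, u₂)` and `(v₁, v₂)` are adjacent iff either `u₁ = v₁` is an original
vertex and `u₂v₂ ∈ E(H)`, or `u₂ = v₂` and `u₁v₁ ∈ E(K)`. -/
def fSum {V E W : Type*} (K : SimpleGraph (V ⊕ E)) (H : SimpleGraph W) :
    SimpleGraph ((V ⊕ E) × W) :=
  SimpleGraph.fromRel fun a b =>
    (a.1 = b.1 ∧ (∃ u : V, a.1 = Sum.inl u) ∧ H.Adj a.2 b.2) ∨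
      (a.2 = b.2 ∧ K.Adj a.1 b.1)

/-- The `S`-sum `G +_S H`. -/
def sSum {V W : Type*} (G : SimpleGraph V) (H : SimpleGraph W) :
    SimpleGraph ((V ⊕ ↥G.edgeSet) × W) :=
  fSum (subdivisionGraph G) H

/-- The `R`-sum `G +_R H`. -/
def rSum {V W : Type*} (G : SimpleGraph V) (H : SimpleGraph W) :
    SimpleGraph ((V ⊕ ↥G.edgeSet) × W) :=
  fSum (rGraph G) H

/-- The `Q`-sum `G +_Q H`. -/
def qSum {V W : Type*} (G : SimpleGraph V) (H : SimpleGraph W) :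
    SimpleGraph ((V ⊕ ↥G.edgeSet) × W) :=
  fSum (qGraph G) H

/-- The `T`-sum `G +_T H`. -/
def tSum {V W : Type*} (G : SimpleGraph V) (H : SimpleGraph W) :
    SimpleGraph ((V ⊕ ↥G.edgeSet) × W) :=
  fSum (tGraph G) H

/-- The star graph `S_n = K_{1,n}`. -/
def starGraph (n : ℕ) : SimpleGraph (Fin 1 ⊕ Fin n) :=
  completeBipartiteGraph (Fin 1) (Fin n)

section ATAux

open Finset

variable {V : Type*}

lemma arcOutDeg_eq_card [Fintype V] (A : Finset (V × V)) (v : V) :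
    arcOutDeg A v = (univ.filter fun u => (v, u) ∈ A).card := by
  unfold arcOutDeg
  apply Finset.card_bij (fun a _ => a.2)
  · intro a ha
    simp only [mem_filter] at ha ⊢
    exact ⟨mem_univ _, by rw [show (v, a.2) = a from by rw [← ha.2]]; exact ha.1⟩
  · intro a ha b hb h
    simp only [mem_filter] at ha hb
    exact Prod.ext (ha.2.trans hb.2.symm) h
  · intro b hb
    simp only [mem_filter] at hb
    exact ⟨(v, b), mem_filter.2 ⟨hb.2, rfl⟩, rfl⟩

lemma arcInDeg_eq_card [Fintype V] (A : Finset (V × V)) (v : V) :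
    arcInDeg A v = (univ.filter fun u => (u, v) ∈ A).card := by
  unfold arcInDeg
  apply Finset.card_bij (fun a _ => a.1)
  · intro a ha
    simp only [mem_filter] at ha ⊢
    exact ⟨mem_univ _, by rw [show (a.1, v) = a from by rw [← ha.2]]; exact ha.1⟩
  · intro a ha b hb h
    simp only [mem_filter] at ha hb
    exact Prod.ext h (ha.2.trans hb.2.symm)
  · intro b hb
    simp only [mem_filter] at hb
    exact ⟨(b, v), mem_filter.2 ⟨hb.2, rfl⟩, rfl⟩

lemma sum_arcOutDeg [Fintype V] (A : Finset (V × V)) :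
    ∑ v, arcOutDeg A v = A.card := by
  unfold arcOutDeg
  exact (Finset.card_eq_sum_card_fiberwise (f := Prod.fst) (fun a _ => mem_univ _)).symm

lemma sum_arcInDeg [Fintype V] (A : Finset (V × V)) :
    ∑ v, arcInDeg A v = A.card := by
  unfold arcInDeg
  exact (Finset.card_eq_sum_card_fiberwise (f := Prod.snd) (fun a _ => mem_univ _)).symm

lemma indeg_add_outdeg [Fintype V] {G : SimpleGraph V} {A : Finset (V × V)}
    (hA : IsOrientation G A) (v : V) :
    arcInDeg A v + arcOutDeg A v = (univ.filter fun u => G.Adj v u).card := by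
  rw [arcInDeg_eq_card, arcOutDeg_eq_card]
  have hsplit : (univ.filter fun u => G.Adj v u)
      = (univ.filter fun u => (u, v) ∈ A) ∪ (univ.filter fun u => (v, u) ∈ A) := by
    rw [← Finset.filter_or]
    apply Finset.filter_congr
    intro u _
    constructor
    · intro h
      by_cases hc : (v, u) ∈ A
      · exact Or.inr hc
      · exact Or.inl ((hA.2 u v h.symm).2 hc)
    · rintro (h | h)
      · exact (hA.1 _ h).symm
      · exact hA.1 _ h
  rw [hsplit, Finset.card_union_of_disjoint]
  rw [Finset.disjoint_left]
  intro u h1 h2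
  simp only [mem_filter] at h1 h2
  exact ((hA.2 u v (hA.1 _ h1.2)).1 h1.2) h2.2

lemma isEulerianSub_empty : IsEulerianSub (∅ : Finset (V × V)) := by
  intro v; simp [arcInDeg, arcOutDeg]

lemma eulerian_eq_empty (A : Finset (V × V)) (f : V → ℕ)
    (hA : ∀ a ∈ A, f a.2 < f a.1) (B : Finset (V × V)) (hBA : B ⊆ A)
    (hB : IsEulerianSub B) : B = ∅ := by
  by_contra h
  obtain ⟨a, ha⟩ := Finset.nonempty_of_ne_empty h
  set T := B.image fun a => f a.2 with hT
  have hTne : T.Nonempty := ⟨f a.2, mem_image_of_mem _ ha⟩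
  obtain ⟨a0, ha0B, ha0t⟩ := mem_image.1 (T.min'_mem hTne)
  have hin : 0 < arcInDeg B a0.2 :=
    card_pos.2 ⟨a0, mem_filter.2 ⟨ha0B, rfl⟩⟩
  have hout : 0 < arcOutDeg B a0.2 := by rw [← hB a0.2]; exact hin
  obtain ⟨b, hb⟩ := card_pos.1 hout
  rw [mem_filter] at hb
  have h1 : f b.2 < f b.1 := hA b (hBA hb.1)
  have h2 : T.min' hTne ≤ f b.2 := T.min'_le _ (mem_image_of_mem _ hb.1)
  rw [← ha0t, ← hb.2] at h2
  omega

lemma isAT_of_rank (A : Finset (V × V)) (f : V → ℕ)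
    (hA : ∀ a ∈ A, f a.2 < f a.1) : IsATOrientation A := by
  have heven : A.powerset.filter (fun B => IsEulerianSub B ∧ Even B.card) = {∅} := by
    ext B
    simp only [mem_filter, mem_powerset, mem_singleton]
    constructor
    · rintro ⟨h1, h2, _⟩
      exact eulerian_eq_empty A f hA B h1 h2
    · rintro rfl
      exact ⟨empty_subset _, isEulerianSub_empty, by simp⟩
  have hodd : A.powerset.filter (fun B => IsEulerianSub B ∧ ¬ Even B.card) = ∅ := by
    rw [Finset.eq_empty_iff_forall_notMem]
    intro B hB
    simp only [mem_filter, mem_powerset] at hB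
    have := eulerian_eq_empty A f hA B hB.1 hB.2.1
    subst this
    exact hB.2.2 (by simp)
  unfold IsATOrientation
  rw [heven, hodd]
  simp

lemma isOrientation_rank [Fintype V] (G : SimpleGraph V) (f : V → ℕ)
    (hf : ∀ u v : V, G.Adj u v → f u ≠ f v) :
    IsOrientation G (univ.filter fun a : V × V => G.Adj a.1 a.2 ∧ f a.2 < f a.1) := by
  constructor
  · intro a ha
    exact (mem_filter.1 ha).2.1
  · intro u v huv
    simp only [mem_filter, mem_univ, true_and]
    have := hf u v huv
    constructor
    · rintro ⟨_, h⟩ ⟨_, h'⟩; omega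
    · intro h
      refine ⟨huv, ?_⟩
      have h1 : ¬ (G.Adj v u ∧ f u < f v) := h
      have h2 : ¬ f u < f v := fun hc => h1 ⟨huv.symm, hc⟩
      omega

lemma subdivisionGraph_adj {G : SimpleGraph V} {x y : V ⊕ ↥G.edgeSet} :
    (subdivisionGraph G).Adj x y ↔
      (∃ u e, x = Sum.inl u ∧ y = Sum.inr e ∧ u ∈ (e : Sym2 V)) ∨
      (∃ u e, x = Sum.inr e ∧ y = Sum.inl u ∧ u ∈ (e : Sym2 V)) := by
  unfold subdivisionGraph
  rw [SimpleGraph.fromRel_adj]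
  cases x <;> cases y <;> simp

lemma sSum_adj {W : Type*} {G : SimpleGraph V} {H : SimpleGraph W}
    {a b : (V ⊕ ↥G.edgeSet) × W} :
    (sSum G H).Adj a b ↔
      (a.1 = b.1 ∧ (∃ u, a.1 = Sum.inl u) ∧ H.Adj a.2 b.2) ∨
      (a.2 = b.2 ∧ (subdivisionGraph G).Adj a.1 b.1) := by
  unfold sSum fSum
  rw [SimpleGraph.fromRel_adj]
  constructor
  · rintro ⟨hne, (⟨h1, h2, h3⟩ | ⟨h1, h2⟩) | (⟨h1, h2, h3⟩ | ⟨h1, h2⟩)⟩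
    · exact Or.inl ⟨h1, h2, h3⟩
    · exact Or.inr ⟨h1, h2⟩
    · exact Or.inl ⟨h1.symm, h1 ▸ h2, h3.symm⟩
    · exact Or.inr ⟨h1.symm, h2.symm⟩
  · rintro (⟨h1, h2, h3⟩ | ⟨h1, h2⟩)
    · exact ⟨fun h => H.ne_of_adj h3 (congrArg Prod.snd h), Or.inl (Or.inl ⟨h1, h2, h3⟩)⟩
    · exact ⟨fun h => (subdivisionGraph G).ne_of_adj h2 (congrArg Prod.fst h),
        Or.inl (Or.inr ⟨h1, h2⟩)⟩

end ATAux

section CycleAux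

open SimpleGraph

lemma cycle_adj_succ (n' : ℕ) (u : Fin (n'+3)) : (cycleGraph (n'+3)).Adj u (u+1) :=
  cycleGraph_adj.mpr (Or.inr (add_sub_cancel_left u 1))

lemma cycle_adj_pred (n' : ℕ) (u : Fin (n'+3)) : (cycleGraph (n'+3)).Adj u (u-1) :=
  cycleGraph_adj.mpr (Or.inl (sub_sub_cancel u 1))

lemma fin_succ_ne_pred (n' : ℕ) (u : Fin (n'+3)) : u + 1 ≠ u - 1 := by
  intro h
  have h2 : (2 : Fin (n'+3)) = 0 := by
    calc (2 : Fin (n'+3)) = (u+1) - (u-1) := by open Fin.CommRing in ring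
    _ = (u-1) - (u-1) := by rw [h]
    _ = 0 := sub_self _
  have := congrArg (fun x : Fin (n'+3) => (x : ℕ)) h2
  simp at this
  rw [Nat.mod_eq_of_lt (by omega)] at this
  omega

lemma fin_succ_ne_self (n' : ℕ) (u : Fin (n'+3)) : u + 1 ≠ u := by
  intro h
  have h2 : (1 : Fin (n'+3)) = 0 := by
    calc (1 : Fin (n'+3)) = (u+1) - u := by open Fin.CommRing in ring
    _ = u - u := by rw [h]
    _ = 0 := sub_self _
  have := congrArg (fun x : Fin (n'+3) => (x : ℕ)) h2
  simp at this

lemma sym2_exists_rep {α : Type*} (z : Sym2 α) : ∃ x y, z = s(x, y) := by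
  induction z using Sym2.ind with
  | _ x y => exact ⟨x, y, rfl⟩

end CycleAux


section Stmt6Aux

open SimpleGraph Finset

variable (n' m : ℕ)

private abbrev V6 (n' m : ℕ) := ((Fin (n'+3)) ⊕ ↥(cycleGraph (n'+3)).edgeSet) × Fin m

private def rank6 (n' m : ℕ) : V6 n' m → ℕ
  | (Sum.inl _, j) => (j : ℕ)
  | (Sum.inr _, _) => m

set_option maxHeartbeats 1000000 in
lemma stmt6_upper :
    ∃ A : Finset (V6 n' m × V6 n' m),
      IsOrientation (sSum (cycleGraph (n'+3)) (pathGraph m)) A ∧ IsATOrientation A ∧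
      ∀ v, arcOutDeg A v < 3 := by
  set G2 := sSum (cycleGraph (n'+3)) (pathGraph m) with hG2
  set f : V6 n' m → ℕ := rank6 n' m with hf
  have hfne : ∀ a b : V6 n' m, G2.Adj a b → f a ≠ f b := by
    rintro ⟨a1, a2⟩ ⟨b1, b2⟩ hab
    rcases sSum_adj.1 hab with ⟨h1, ⟨u, hu⟩, h3⟩ | ⟨h2, hadj⟩
    · simp only at h1 hu h3
      subst h1; subst hu
      simp only [hf, rank6]
      rcases pathGraph_adj.1 h3 with h | h <;> omega
    · simp only at h2 hadj
      subst h2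
      rcases subdivisionGraph_adj.1 hadj with ⟨u, e, hx, hy, _⟩ | ⟨u, e, hx, hy, _⟩ <;>
          subst hx <;> subst hy <;> simp only [hf, rank6]
      · have := a2.isLt; omega
      · have := a2.isLt; omega
  refine ⟨univ.filter fun a => G2.Adj a.1 a.2 ∧ f a.2 < f a.1,
    isOrientation_rank G2 f hfne,
    isAT_of_rank _ f (fun a ha => (mem_filter.1 ha).2.2), ?_⟩
  intro v
  rw [arcOutDeg_eq_card]
  obtain ⟨v1, j⟩ := v
  cases v1 with
  | inl u =>
    refine lt_of_le_of_lt (Finset.card_le_one.2 ?_) (by norm_num)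
    have key : ∀ w : V6 n' m,
        (G2.Adj (Sum.inl u, j) w ∧ f w < f ((Sum.inl u, j) : V6 n' m)) →
        w.1 = Sum.inl u ∧ (w.2 : ℕ) + 1 = (j : ℕ) := by
      rintro ⟨w1, w2⟩ ⟨hadj, hlt⟩
      rcases sSum_adj.1 hadj with ⟨h1, ⟨u', hu⟩, h3⟩ | ⟨h2, hadj'⟩
      · simp only at h1 h3 ⊢
        subst h1
        simp only [hf, rank6] at hlt
        rcases pathGraph_adj.1 h3 with h | h
        · omega
        · exact ⟨rfl, h⟩
      · exfalso
        simp only at h2 hadj'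
        rcases subdivisionGraph_adj.1 hadj' with ⟨u', e, hx, hy, _⟩ | ⟨u', e, hx, hy, _⟩
        · subst hy; subst h2
          simp only [hf, rank6] at hlt
          have := j.isLt; omega
        · exact absurd hx (by simp)
    intro w hw w' hw'
    simp only [mem_filter, mem_univ, true_and] at hw hw'
    obtain ⟨h1, h2⟩ := key w hw
    obtain ⟨h1', h2'⟩ := key w' hw'
    obtain ⟨wa, wb⟩ := w; obtain ⟨wa', wb'⟩ := w'
    simp only at h1 h1' h2 h2'
    subst h1; subst h1'
    have : wb = wb' := Fin.ext (by omega)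
    rw [this]
  | inr e =>
    obtain ⟨x, y, hxy⟩ := sym2_exists_rep (e : Sym2 (Fin (n'+3)))
    refine lt_of_le_of_lt (Finset.card_le_card
      (?_ : _ ⊆ ({((Sum.inl x, j) : V6 n' m), (Sum.inl y, j)} : Finset (V6 n' m)))) ?_
    · intro w hw
      simp only [mem_filter, mem_univ, true_and] at hw
      obtain ⟨hadj, _⟩ := hw
      rcases sSum_adj.1 hadj with ⟨_, ⟨u', hu⟩, _⟩ | ⟨h2, hadj'⟩
      · exact absurd hu (by simp)
      · rcases subdivisionGraph_adj.1 hadj' with ⟨u', e', hx', hy', _⟩ | ⟨u', e', hx', hy', hmem'⟩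
        · exact absurd hx' (by simp)
        · obtain ⟨w1, w2⟩ := w
          simp only at hx' hy' h2 hmem'
          subst hy'
          have he : e' = e := Sum.inr.inj hx'.symm
          subst he
          rw [hxy, Sym2.mem_iff] at hmem'
          subst h2
          rcases hmem' with h | h <;> subst h <;> simp
    · exact lt_of_le_of_lt (Finset.card_insert_le _ _) (by simp)

set_option maxHeartbeats 1000000 in
lemma stmt6_lower (hm : 2 ≤ m)
    (A : Finset (V6 n' m × V6 n' m))
    (hor : IsOrientation (sSum (cycleGraph (n'+3)) (pathGraph m)) A)
    (hout : ∀ v, arcOutDeg A v ≤ 1) : False := by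
  set G2 := sSum (cycleGraph (n'+3)) (pathGraph m) with hG2
  -- adjacency facts
  have hadj_edge : ∀ (u : Fin (n'+3)) (hu : (cycleGraph (n'+3)).Adj u (u+1)) (j : Fin m), True := fun _ _ _ => trivial
  -- every vertex has degree ≥ 2, and (inl 0, 0) has degree ≥ 3
  have hdeg2 : ∀ v : V6 n' m, 2 ≤ (univ.filter fun w => G2.Adj v w).card := by
    rintro ⟨v1, j⟩
    cases v1 with
    | inl u =>
      set e1 : ↥(cycleGraph (n'+3)).edgeSet := ⟨s(u, u+1), cycle_adj_succ n' u⟩ with he1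
      set e2 : ↥(cycleGraph (n'+3)).edgeSet := ⟨s(u, u-1), cycle_adj_pred n' u⟩ with he2
      have hne : e1 ≠ e2 := by
        intro h
        have := congrArg Subtype.val h
        rw [he1, he2] at this
        simp only [Sym2.eq, Sym2.rel_iff', Prod.mk.injEq, Prod.swap_prod_mk] at this
        rcases this with ⟨_, h2⟩ | ⟨h1, h2⟩
        · exact fin_succ_ne_pred n' u h2
        · exact fin_succ_ne_self n' u h2
      have h1 : G2.Adj (Sum.inl u, j) (Sum.inr e1, j) := by
        rw [hG2, sSum_adj]
        exact Or.inr ⟨rfl, subdivisionGraph_adj.2 (Or.inl ⟨u, e1, rfl, rfl, by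
          rw [he1]; exact Sym2.mem_mk_left u (u+1)⟩)⟩
      have h2 : G2.Adj (Sum.inl u, j) (Sum.inr e2, j) := by
        rw [hG2, sSum_adj]
        exact Or.inr ⟨rfl, subdivisionGraph_adj.2 (Or.inl ⟨u, e2, rfl, rfl, by
          rw [he2]; exact Sym2.mem_mk_left u (u-1)⟩)⟩
      have hsub : ({((Sum.inr e1, j) : V6 n' m), (Sum.inr e2, j)} : Finset (V6 n' m)) ⊆
          univ.filter fun w => G2.Adj (Sum.inl u, j) w := by
        intro w hw
        simp only [mem_insert, mem_singleton] at hw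
        rcases hw with rfl | rfl <;> simp [h1, h2]
      have hcard : ({((Sum.inr e1, j) : V6 n' m), (Sum.inr e2, j)} : Finset (V6 n' m)).card = 2 :=
        Finset.card_pair (by simp [Prod.ext_iff, hne])
      exact le_trans (le_of_eq hcard.symm) (Finset.card_le_card hsub)
    | inr e =>
      obtain ⟨x, y, hxy⟩ := sym2_exists_rep (e : Sym2 (Fin (n'+3)))
      have hadjxy : (cycleGraph (n'+3)).Adj x y := by
        have := e.2
        rw [hxy] at this
        exact this
      have h1 : G2.Adj (Sum.inr e, j) (Sum.inl x, j) := by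
        rw [hG2, sSum_adj]
        exact Or.inr ⟨rfl, subdivisionGraph_adj.2 (Or.inr ⟨x, e, rfl, rfl, by
          rw [hxy]; exact Sym2.mem_mk_left x y⟩)⟩
      have h2 : G2.Adj (Sum.inr e, j) (Sum.inl y, j) := by
        rw [hG2, sSum_adj]
        exact Or.inr ⟨rfl, subdivisionGraph_adj.2 (Or.inr ⟨y, e, rfl, rfl, by
          rw [hxy]; exact Sym2.mem_mk_right x y⟩)⟩
      have hsub : ({((Sum.inl x, j) : V6 n' m), (Sum.inl y, j)} : Finset (V6 n' m)) ⊆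
          univ.filter fun w => G2.Adj (Sum.inr e, j) w := by
        intro w hw
        simp only [mem_insert, mem_singleton] at hw
        rcases hw with rfl | rfl <;> simp [h1, h2]
      have hcard : ({((Sum.inl x, j) : V6 n' m), (Sum.inl y, j)} : Finset (V6 n' m)).card = 2 :=
        Finset.card_pair (by simp [Prod.ext_iff, hadjxy.ne])
      exact le_trans (le_of_eq hcard.symm) (Finset.card_le_card hsub)
  -- the special vertex
  set j0 : Fin m := ⟨0, by omega⟩ with hj0
  set j1 : Fin m := ⟨1, by omega⟩ with hj1
  set v0 : V6 n' m := (Sum.inl 0, j0) with hv0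
  have hdeg3 : 3 ≤ (univ.filter fun w => G2.Adj v0 w).card := by
    set e1 : ↥(cycleGraph (n'+3)).edgeSet := ⟨s(0, 0+1), cycle_adj_succ n' 0⟩ with he1
    set e2 : ↥(cycleGraph (n'+3)).edgeSet := ⟨s(0, 0-1), cycle_adj_pred n' 0⟩ with he2
    have hne : e1 ≠ e2 := by
      intro h
      have := congrArg Subtype.val h
      rw [he1, he2] at this
      simp only [Sym2.eq, Sym2.rel_iff', Prod.mk.injEq, Prod.swap_prod_mk] at this
      rcases this with ⟨_, h2⟩ | ⟨h1, h2⟩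
      · exact fin_succ_ne_pred n' 0 h2
      · exact fin_succ_ne_self n' 0 h2
    have h1 : G2.Adj v0 (Sum.inr e1, j0) := by
      rw [hG2, sSum_adj]
      exact Or.inr ⟨rfl, subdivisionGraph_adj.2 (Or.inl ⟨0, e1, rfl, rfl, by
        rw [he1]; exact Sym2.mem_mk_left 0 (0+1)⟩)⟩
    have h2 : G2.Adj v0 (Sum.inr e2, j0) := by
      rw [hG2, sSum_adj]
      exact Or.inr ⟨rfl, subdivisionGraph_adj.2 (Or.inl ⟨0, e2, rfl, rfl, by
        rw [he2]; exact Sym2.mem_mk_left 0 (0-1)⟩)⟩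
    have h3 : G2.Adj v0 (Sum.inl 0, j1) := by
      rw [hG2, sSum_adj]
      exact Or.inl ⟨rfl, ⟨0, rfl⟩, pathGraph_adj.2 (Or.inl rfl)⟩
    have hsub : ({((Sum.inr e1, j0) : V6 n' m), (Sum.inr e2, j0), (Sum.inl 0, j1)} :
        Finset (V6 n' m)) ⊆ univ.filter fun w => G2.Adj v0 w := by
      intro w hw
      simp only [mem_insert, mem_singleton] at hw
      rcases hw with rfl | rfl | rfl <;> simp [h1, h2, h3]
    have hcard : ({((Sum.inr e1, j0) : V6 n' m), (Sum.inr e2, j0), (Sum.inl 0, j1)} :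
        Finset (V6 n' m)).card = 3 := by
      rw [Finset.card_insert_of_notMem (by simp [Prod.ext_iff, hne]),
        Finset.card_pair (by simp [Prod.ext_iff])]
    exact le_trans (le_of_eq hcard.symm) (Finset.card_le_card hsub)
  have hin : ∀ v : V6 n' m, 1 ≤ arcInDeg A v := by
    intro v
    have h1 := indeg_add_outdeg hor v
    have h2 := hout v
    have h3 := hdeg2 v
    omega
  have hin0 : 2 ≤ arcInDeg A v0 := by
    have h1 := indeg_add_outdeg hor v0
    have h2 := hout v0
    omega
  have hsum : ∑ v, arcInDeg A v = ∑ v, arcOutDeg A v := by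
    rw [sum_arcInDeg, sum_arcOutDeg]
  have h1 : ∑ v, arcOutDeg A v ≤ ∑ _v : V6 n' m, 1 :=
    Finset.sum_le_sum fun v _ => hout v
  have h2 : ∑ _v : V6 n' m, 1 < ∑ v, arcInDeg A v :=
    Finset.sum_lt_sum (fun v _ => hin v) ⟨v0, mem_univ _, by omega⟩
  omega

end Stmt6Aux

/-- `AT(C_n +_S P_m) = 3` for `n ≥ 3`, `m ≥ 2`. -/
theorem stmt6 (n m : ℕ) (hn : 3 ≤ n) (hm : 2 ≤ m) :
    alonTarsiNumber (sSum (SimpleGraph.cycleGraph n) (SimpleGraph.pathGraph m)) = 3 := by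
  obtain ⟨n', rfl⟩ : ∃ n', n = n' + 3 := ⟨n - 3, by omega⟩
  obtain ⟨A, hor, hat, houtd⟩ := stmt6_upper n' m
  have hmem : 3 ∈ {k : ℕ | ∃ A : Finset (V6 n' m × V6 n' m),
      IsOrientation (sSum (SimpleGraph.cycleGraph (n'+3)) (SimpleGraph.pathGraph m)) A ∧
      IsATOrientation A ∧ ∀ v, arcOutDeg A v < k} := ⟨A, hor, hat, houtd⟩
  unfold alonTarsiNumber
  apply le_antisymm
  · exact Nat.sInf_le hmem
  · apply le_csInf ⟨3, hmem⟩
    rintro k ⟨A', hor', _, hout'⟩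
    by_contra hlt
    push_neg at hlt
    exact stmt6_lower n' m hm A' hor' (fun v => by have := hout' v; omega)
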